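/- Assume C satisfies condition (⋆). Then C is mp if and only if O(p) ⊔ O(q) = ⊤ for all distinct minimal primes p,q of C. -/
import Mathlib


open CompleteLattice

/-- A complete lattice equipped with a commutator operation, axiomatizing the congruence
lattice of an algebra in a semidegenerate congruence-modular variety whose compact
congruences are closed under the commutator. -/
class CommutatorLattice (C : Type*) [CompleteLattice C] where
  comm : C → C → C
  comm_comm : ∀ a b : C, comm a b = comm b a
  comm_sSup : ∀ (s : Set C) (b : C), comm (sSup s) b = ⨆ a ∈ s, comm a b
  comm_le_inf : ∀ a b : C, comm a b ≤ a ⊓ b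
  comm_top : ∀ a : C, comm a ⊤ = a
  compactlyGenerated : ∀ x : C,
    ∃ s : Set C, (∀ a ∈ s, IsCompactElement a) ∧ sSup s = x
  top_isCompact : IsCompactElement (⊤ : C)
  comm_isCompact : ∀ a b : C, IsCompactElement a → IsCompactElement b →
    IsCompactElement (comm a b)

namespace CommutatorLattice

variable {C : Type*} [CompleteLattice C] [CommutatorLattice C]

/-- The residuation `a → b := ⨆ {c | [a,c] ≤ b}`. -/
def resid (a b : C) : C := sSup {c : C | comm a c ≤ b}

/-- The annihilator `a⊥ := a → ⊥`. -/
def ann (a : C) : C := resid a ⊥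

/-- Iterated commutator: `cpow a n = [a,a]^n`, with the convention `[a,a]^0 = a`.
Note that `[a,b]^n` for `n ≥ 1` equals `cpow (comm a b) (n-1)`. -/
def cpow (a : C) : ℕ → C
  | 0 => a
  | n + 1 => comm (cpow a n) (cpow a n)

/-- Prime elements: `p ≠ ⊤` and `[a,b] ≤ p` implies `a ≤ p` or `b ≤ p`. -/
def IsPrime (p : C) : Prop := p ≠ ⊤ ∧ ∀ a b : C, comm a b ≤ p → a ≤ p ∨ b ≤ p

/-- The radical `ρ(a) := ⨅ {p prime | a ≤ p}`. -/
def radical (a : C) : C := sInf {p : C | IsPrime p ∧ a ≤ p}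

variable (C) in
/-- `C` is semiprime if `ρ(⊥) = ⊥`. -/
def Semiprime : Prop := radical (⊥ : C) = ⊥

variable (C) in
/-- Condition (⋆): for all compact `a`, `b` and all `n ≥ 1` there is `m ≥ 0` with
`[[a,a]^m, [b,b]^m] ≤ [a,b]^n`.  Here `cpow (comm a b) n = [a,b]^(n+1)`, so `n : ℕ`
ranges exactly over the exponents `≥ 1` of the paper. -/
def Star : Prop := ∀ a b : C, IsCompactElement a → IsCompactElement b →
  ∀ n : ℕ, ∃ m : ℕ, comm (cpow a m) (cpow b m) ≤ cpow (comm a b) n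

/-- Pure elements: `t ⊔ a⊥ = ⊤` for every compact `a ≤ t`. -/
def IsPure (t : C) : Prop := ∀ a : C, IsCompactElement a → a ≤ t → t ⊔ ann a = ⊤

/-- w-pure elements: `t ⊔ (a → ρ(⊥)) = ⊤` for every compact `a ≤ t`. -/
def IsWPure (t : C) : Prop :=
  ∀ a : C, IsCompactElement a → a ≤ t → t ⊔ resid a (radical ⊥) = ⊤

/-- Complemented elements. -/
def IsComplEl (a : C) : Prop := ∃ b : C, a ⊔ b = ⊤ ∧ a ⊓ b = ⊥

/-- Regular elements: joins of sets of complemented elements. -/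
def IsRegular (t : C) : Prop := ∃ S : Set C, (∀ a ∈ S, IsComplEl a) ∧ t = sSup S

/-- Max-regular elements: maximal among regular elements distinct from `⊤`. -/
def IsMaxRegular (t : C) : Prop :=
  IsRegular t ∧ t ≠ ⊤ ∧ ∀ u : C, IsRegular u → u ≠ ⊤ → t ≤ u → u = t

/-- Maximal elements of `C \ {⊤}`. -/
def IsMaximal (p : C) : Prop := p ≠ ⊤ ∧ ∀ q : C, q ≠ ⊤ → p ≤ q → q = p

/-- Minimal primes. -/
def IsMinPrime (p : C) : Prop := IsPrime p ∧ ∀ q : C, IsPrime q → q ≤ p → q = p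

variable (C) in
/-- `C` is mp if every prime lies above a unique minimal prime. -/
def MP : Prop := ∀ p : C, IsPrime p → ∃! q : C, IsMinPrime q ∧ q ≤ p

variable (C) in
/-- `C` is PF if `a⊥` is pure for every compact `a`. -/
def PF : Prop := ∀ a : C, IsCompactElement a → IsPure (ann a)

variable (C) in
/-- `C` is PP if `a⊥` is complemented for every compact `a`. -/
def PP : Prop := ∀ a : C, IsCompactElement a → IsComplEl (ann a)

/-- `O(p) := ⨆ {a compact | a⊥ ≰ p}`. -/
def O (p : C) : C := sSup {a : C | IsCompactElement a ∧ ¬ ann a ≤ p}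

variable (C) in
/-- `C` is normal. -/
def Normal : Prop := ∀ t u : C, t ⊔ u = ⊤ →
  ∃ a b : C, t ⊔ a = ⊤ ∧ u ⊔ b = ⊤ ∧ comm a b = ⊥

variable (C) in
/-- `C` is B-normal. -/
def BNormal : Prop := ∀ t u : C, t ⊔ u = ⊤ →
  ∃ a b : C, IsComplEl a ∧ IsComplEl b ∧ t ⊔ a = ⊤ ∧ u ⊔ b = ⊤ ∧ comm a b = ⊥

variable (C) in
/-- `C` is purified. -/
def Purified : Prop := ∀ p q : C, IsMinPrime p → IsMinPrime q → p ≠ q →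
  ∃ a : C, IsComplEl a ∧ a ≤ p ∧ ann a ≤ q

variable (C) in
/-- The prime spectrum of `C`. -/
abbrev Spec := {p : C // IsPrime p}

variable (C) in
/-- The Zariski topology on `Spec C`: the closed sets are the `V(t) = {p | t ≤ p}`,
equivalently the topology generated by the sets `D(t) = {p | t ≰ p}`. -/
def zariskiTop : TopologicalSpace (Spec C) :=
  TopologicalSpace.generateFrom {U : Set (Spec C) | ∃ t : C, U = {p : Spec C | ¬ t ≤ p.1}}

variable (C) in
/-- The flat topology on `Spec C`: generated by the open basis `V(a)`, `a` compact. -/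
def flatTop : TopologicalSpace (Spec C) :=
  TopologicalSpace.generateFrom
    {U : Set (Spec C) | ∃ a : C, IsCompactElement a ∧ U = {p : Spec C | a ≤ p.1}}

-- auxiliary lemmas
theorem comm_sup (a b c : C) : comm (a ⊔ b) c = comm a c ⊔ comm b c := by
  rw [← sSup_pair, comm_sSup, iSup_pair]

theorem comm_mono_left {a a' : C} (h : a ≤ a') (b : C) : comm a b ≤ comm a' b := by
  have : comm (a ⊔ a') b = comm a b ⊔ comm a' b := comm_sup a a' b
  rw [sup_eq_right.2 h] at this
  rw [this]; exact le_sup_left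

theorem comm_mono {a a' b b' : C} (ha : a ≤ a') (hb : b ≤ b') : comm a b ≤ comm a' b' :=
  (comm_mono_left ha b).trans (by rw [comm_comm, comm_comm a' b']; exact comm_mono_left hb a')

theorem comm_le_left (a b : C) : comm a b ≤ a := (comm_le_inf a b).trans inf_le_left
theorem comm_le_right (a b : C) : comm a b ≤ b := (comm_le_inf a b).trans inf_le_right

theorem cpow_le_self (a : C) (n : ℕ) : cpow a n ≤ a := by
  induction n with
  | zero => exact le_rfl
  | succ n ih => exact (comm_le_left _ _).trans ih

theorem cpow_succ_le (a : C) (n : ℕ) : cpow a (n + 1) ≤ cpow a n := comm_le_left _ _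

theorem cpow_antitone (a : C) {m n : ℕ} (h : m ≤ n) : cpow a n ≤ cpow a m := by
  induction n with
  | zero => simp_all
  | succ n ih =>
    rcases Nat.lt_or_ge m (n+1) with h' | h'
    · exact (cpow_succ_le a n).trans (ih (Nat.lt_succ_iff.mp h'))
    · have : m = n + 1 := le_antisymm h h'
      subst this; exact le_rfl

theorem cpow_mono {a b : C} (h : a ≤ b) (n : ℕ) : cpow a n ≤ cpow b n := by
  induction n with
  | zero => exact h
  | succ n ih => exact comm_mono ih ih

theorem cpow_isCompact {a : C} (h : IsCompactElement a) (n : ℕ) :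
    IsCompactElement (cpow a n) := by
  induction n with
  | zero => exact h
  | succ n ih => exact comm_isCompact _ _ ih ih

theorem IsPrime.cpow_le {p a : C} (hp : IsPrime p) {n : ℕ} (h : cpow a n ≤ p) : a ≤ p := by
  induction n with
  | zero => exact h
  | succ n ih =>
    rcases hp.2 _ _ h with h' | h' <;> exact ih h'

theorem comm_ann_le_bot (a : C) : comm a (ann a) ≤ ⊥ := by
  rw [comm_comm, ann, resid, comm_sSup]
  exact iSup₂_le fun c hc => by rw [comm_comm]; exact hc

theorem O_le_prime {p : C} (hp : IsPrime p) : O p ≤ p := by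
  refine sSup_le fun a ha => ?_
  rcases hp.2 a (ann a) (le_trans (comm_ann_le_bot a) bot_le) with h | h
  · exact h
  · exact absurd h ha.2

theorem comm_sup_sup_le {q u v : C} (hq : comm q q ≤ q) :
    comm (q ⊔ u) (q ⊔ v) ≤ q ⊔ comm u v := by
  rw [comm_sup, comm_comm q (q ⊔ v), comm_comm u (q ⊔ v), comm_sup, comm_sup]
  have h1 : comm q q ≤ q := hq
  have h2 : comm v q ≤ q := comm_le_right _ _
  have h3 : comm q u ≤ q := comm_le_left _ _
  have h4 : comm v u ≤ comm u v := by rw [comm_comm]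
  refine sup_le (sup_le (h1.trans le_sup_left) (h2.trans le_sup_left))
    (sup_le (h3.trans le_sup_left) (h4.trans le_sup_right))

theorem comm_top_top : (comm ⊤ ⊤ : C) = ⊤ := comm_top ⊤

-- existence of maximal elements above any non-top element
theorem exists_maximal_above {x : C} (hx : x ≠ ⊤) :
    ∃ m : C, x ≤ m ∧ m ≠ ⊤ ∧ ∀ y : C, y ≠ ⊤ → m ≤ y → y = m := by
  obtain ⟨m, hxm, hm⟩ := zorn_le_nonempty₀ {y : C | y ≠ ⊤} (fun c hc hchain y hy => by
    refine ⟨sSup c, ?_, fun z hz => le_sSup hz⟩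
    intro htop
    have : (⊤ : C) ≤ sSup c := htop ▸ le_rfl
    obtain ⟨z, hzc, hz⟩ := (isCompactElement_iff_le_of_directed_sSup_le C (⊤:C)).mp
      top_isCompact c ⟨y, hy⟩ hchain.directedOn this
    exact hc hzc (top_le_iff.mp hz)) x hx
  exact ⟨m, hxm, hm.1, fun y hy hmy => le_antisymm (hm.2 hy hmy) hmy⟩

theorem maximal_isPrime {m : C} (hm : m ≠ ⊤) (hmax : ∀ y : C, y ≠ ⊤ → m ≤ y → y = m) :
    IsPrime m := by
  refine ⟨hm, fun a b hab => ?_⟩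
  by_contra h
  push_neg at h
  have ha : m ⊔ a = ⊤ := by
    by_contra h'
    exact h.1 (le_trans le_sup_right (le_of_eq (hmax _ h' le_sup_left)))
  have hb : m ⊔ b = ⊤ := by
    by_contra h'
    exact h.2 (le_trans le_sup_right (le_of_eq (hmax _ h' le_sup_left)))
  have : (⊤ : C) ≤ m ⊔ comm a b := by
    calc (⊤:C) = comm (m ⊔ a) (m ⊔ b) := by rw [ha, hb, comm_top_top]
    _ ≤ m ⊔ comm a b := comm_sup_sup_le (comm_le_left m m)
  exact hm (top_le_iff.mp (this.trans (sup_le le_rfl hab) : (⊤:C) ≤ m))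


theorem le_of_compacts_le {x y : C} (h : ∀ a : C, IsCompactElement a → a ≤ x → a ≤ y) :
    x ≤ y := by
  obtain ⟨s, hs, hsup⟩ := compactlyGenerated x
  rw [← hsup]
  exact sSup_le fun a ha => h a (hs a ha) (hsup ▸ le_sSup ha)

theorem minPrime_nilpotent {p a : C} (hp : IsMinPrime p) (ha : IsCompactElement a)
    (hap : a ≤ p) :
    ∃ b : C, IsCompactElement b ∧ ¬ b ≤ p ∧ ∃ n : ℕ, cpow (comm a b) n = ⊥ := by
  by_contra H
  push_neg at H
  set S : Set C := {s | IsCompactElement s ∧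
    ∃ c : C, IsCompactElement c ∧ ¬ c ≤ p ∧ ∃ n, cpow (comm a c) n ≤ s} with hS
  have haS : a ∈ S := by
    refine ⟨ha, ⊤, top_isCompact, fun h => hp.1.1 (top_unique h), 0, ?_⟩
    show cpow (comm a ⊤) 0 ≤ a
    rw [comm_top]
    exact le_rfl
  have hbase : ∀ b : C, IsCompactElement b → ¬ b ≤ p → b ∈ S := fun b hb hbp =>
    ⟨hb, b, hb, hbp, 0, comm_le_right a b⟩
  have hclosed : ∀ s ∈ S, ∀ t ∈ S, comm s t ∈ S := by
    rintro s ⟨hs, c, hc, hcp, n, hn⟩ t ⟨ht, c', hc', hc'p, n', hn'⟩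
    refine ⟨comm_isCompact s t hs ht, comm c c', comm_isCompact c c' hc hc', ?_, ?_⟩
    · intro hle
      rcases hp.1.2 c c' hle with h' | h'
      exacts [hcp h', hc'p h']
    · set N := max n n'
      refine ⟨N + 1, ?_⟩
      have h1 : cpow (comm a (comm c c')) N ≤ s := by
        calc cpow (comm a (comm c c')) N ≤ cpow (comm a c) N :=
              cpow_mono (comm_mono le_rfl (comm_le_left c c')) N
          _ ≤ cpow (comm a c) n := cpow_antitone _ (le_max_left n n')
          _ ≤ s := hn
      have h2 : cpow (comm a (comm c c')) N ≤ t := by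
        calc cpow (comm a (comm c c')) N ≤ cpow (comm a c') N :=
              cpow_mono (comm_mono le_rfl (comm_le_right c c')) N
          _ ≤ cpow (comm a c') n' := cpow_antitone _ (le_max_right n n')
          _ ≤ t := hn'
      exact comm_mono h1 h2
  -- Zorn to get a prime avoiding S
  set A : Set C := {y : C | ∀ s ∈ S, ¬ s ≤ y} with hA
  have hbotA : (⊥ : C) ∈ A := by
    rintro s ⟨hs, c, hc, hcp, n, hn⟩ hle
    exact H c hc hcp n (le_antisymm (hn.trans hle) bot_le)
  obtain ⟨q, -, hqA, hqmax⟩ := by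
    refine zorn_le_nonempty₀ A (fun c hc hchain y hy => ?_) ⊥ hbotA
    refine ⟨sSup c, fun s hsS hle => ?_, fun z hz => le_sSup hz⟩
    obtain ⟨z, hzc, hz⟩ := (isCompactElement_iff_le_of_directed_sSup_le C s).mp
      hsS.1 c ⟨y, hy⟩ hchain.directedOn hle
    exact hc hzc s hsS hz
  have haq : ¬ a ≤ q := hqA a haS
  have hqprime : IsPrime q := by
    refine ⟨fun h => haq (h ▸ le_top), fun u v huv => ?_⟩
    by_contra h
    push_neg at h
    have h1 : ∃ s ∈ S, s ≤ q ⊔ u := by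
      by_contra h1
      push_neg at h1
      have : q ⊔ u ≤ q := hqmax (fun s hs => h1 s hs) le_sup_left
      exact h.1 (le_sup_right.trans this)
    have h2 : ∃ s ∈ S, s ≤ q ⊔ v := by
      by_contra h2
      push_neg at h2
      have : q ⊔ v ≤ q := hqmax (fun s hs => h2 s hs) le_sup_left
      exact h.2 (le_sup_right.trans this)
    obtain ⟨s, hsS, hs⟩ := h1
    obtain ⟨t, htS, ht⟩ := h2
    refine hqA (comm s t) (hclosed s hsS t htS) ?_
    calc comm s t ≤ comm (q ⊔ u) (q ⊔ v) := comm_mono hs ht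
      _ ≤ q ⊔ comm u v := comm_sup_sup_le (comm_le_left q q)
      _ ≤ q := sup_le le_rfl huv
  have hqp : q ≤ p := le_of_compacts_le fun b hb hbq => by
    by_contra hbp
    exact hqA b (hbase b hb hbp) hbq
  exact haq ((hp.2 q hqprime hqp).symm ▸ hap)

theorem minPrime_le_of_O_le (hstar : Star C) {p m : C} (hp : IsMinPrime p) (hm : IsPrime m)
    (h : O p ≤ m) : p ≤ m := by
  refine le_of_compacts_le fun a ha hap => ?_
  obtain ⟨b, hb, hbp, n, hn⟩ := minPrime_nilpotent hp ha hap
  obtain ⟨M, hM⟩ := hstar a b ha hb n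
  rw [hn] at hM
  have hann : cpow b M ≤ ann (cpow a M) := le_sSup hM
  have hannp : ¬ ann (cpow a M) ≤ p := fun h' => hbp (hp.1.cpow_le (hann.trans h'))
  have : cpow a M ≤ O p := le_sSup ⟨cpow_isCompact ha M, hannp⟩
  exact hm.cpow_le (this.trans h)

theorem exists_minPrime_le {r : C} (hr : IsPrime r) : ∃ q : C, IsMinPrime q ∧ q ≤ r := by
  have hchainlem : ∀ c ⊆ {q : Cᵒᵈ | IsPrime (OrderDual.ofDual q) ∧ OrderDual.ofDual q ≤ r},
      IsChain (· ≤ ·) c → ∀ y ∈ c,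
      ∃ ub ∈ {q : Cᵒᵈ | IsPrime (OrderDual.ofDual q) ∧ OrderDual.ofDual q ≤ r},
      ∀ z ∈ c, z ≤ ub := by
    intro c hc hchain y hy
    set P : C := sInf (OrderDual.ofDual '' c) with hP
    have hPle : ∀ z ∈ c, z ≤ OrderDual.toDual P := fun z hz =>
      OrderDual.le_toDual.mpr (sInf_le ⟨z, hz, rfl⟩)
    have hchainC : IsChain (· ≤ ·) (OrderDual.ofDual '' c) := by
      rintro _ ⟨x, hx, rfl⟩ _ ⟨y', hy', rfl⟩ hne
      rcases hchain hx hy' (fun h => hne (congrArg OrderDual.ofDual h)) with h | h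
      · exact Or.inr h
      · exact Or.inl h
    have hyc := hc hy
    have hPprime : IsPrime P := by
      constructor
      · intro htop
        have : OrderDual.ofDual y = ⊤ := top_unique (htop ▸ sInf_le ⟨y, hy, rfl⟩)
        exact hyc.1.1 this
      · intro u v huv
        by_contra hcon
        push_neg at hcon
        obtain ⟨z1, hz1c, hz1⟩ : ∃ z ∈ OrderDual.ofDual '' c, ¬ u ≤ z := by
          by_contra h'
          push_neg at h'
          exact hcon.1 (le_sInf h')
        obtain ⟨z2, hz2c, hz2⟩ : ∃ z ∈ OrderDual.ofDual '' c, ¬ v ≤ z := by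
          by_contra h'
          push_neg at h'
          exact hcon.2 (le_sInf h')
        have hz1p : IsPrime z1 := by
          obtain ⟨w, hw, rfl⟩ := hz1c; exact (hc hw).1
        have hz2p : IsPrime z2 := by
          obtain ⟨w, hw, rfl⟩ := hz2c; exact (hc hw).1
        rcases hchainC.total hz1c hz2c with hle | hle
        · rcases hz1p.2 u v (huv.trans (sInf_le hz1c)) with h' | h'
          exacts [hz1 h', hz2 (h'.trans hle)]
        · rcases hz2p.2 u v (huv.trans (sInf_le hz2c)) with h' | h'
          exacts [hz1 (h'.trans hle), hz2 h']
    refine ⟨OrderDual.toDual P, ⟨hPprime, ?_⟩, fun z hz => hPle z hz⟩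
    have : P ≤ OrderDual.ofDual y := sInf_le ⟨y, hy, rfl⟩
    exact this.trans hyc.2
  obtain ⟨q, hrq, hq, hqmin⟩ := zorn_le_nonempty₀ (α := Cᵒᵈ)
    {q : Cᵒᵈ | IsPrime (OrderDual.ofDual q) ∧ OrderDual.ofDual q ≤ r}
    hchainlem (OrderDual.toDual r) ⟨hr, le_rfl⟩
  refine ⟨OrderDual.ofDual q, ⟨hq.1, fun q' hq' hq'le => ?_⟩, hq.2⟩
  have h1 : q ≤ OrderDual.toDual q' := OrderDual.le_toDual.mpr hq'le
  have h2 := hqmin (y := OrderDual.toDual q') ⟨hq', hq'le.trans hq.2⟩ h1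
  exact le_antisymm hq'le (OrderDual.toDual_le.mp h2)


theorem statement14 (hstar : Star C) :
    MP C ↔ ∀ p q : C, IsMinPrime p → IsMinPrime q → p ≠ q → O p ⊔ O q = ⊤ := by
  constructor
  · intro hmp p q hp hq hpq
    by_contra hne
    obtain ⟨m, hle, hm, hmax⟩ := exists_maximal_above hne
    have hmprime : IsPrime m := maximal_isPrime hm hmax
    have h1 : p ≤ m := minPrime_le_of_O_le hstar hp hmprime ((le_sup_left).trans hle)
    have h2 : q ≤ m := minPrime_le_of_O_le hstar hq hmprime ((le_sup_right).trans hle)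
    obtain ⟨u, -, huniq⟩ := hmp m hmprime
    exact hpq ((huniq p ⟨hp, h1⟩).trans (huniq q ⟨hq, h2⟩).symm)
  · intro hO r hr
    obtain ⟨q, hq, hqr⟩ := exists_minPrime_le hr
    refine ⟨q, ⟨hq, hqr⟩, fun q' ⟨hq', hq'r⟩ => ?_⟩
    by_contra hne
    have := hO q' q hq' hq hne
    have : (⊤ : C) ≤ r := this ▸ sup_le ((O_le_prime hq'.1).trans hq'r)
      ((O_le_prime hq.1).trans hqr)
    exact hr.1 (top_le_iff.mp this)

end CommutatorLattice
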